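/- Fix a > 0 and ε with 0 < ε < 1/3, and for every positive integer k let S_k be a subset of T_k with p_k = Σ_{t ∈ S_k} P_bst(t). Let X_{n,k} denote the number of nodes v of a random binary search tree with n leaves whose fringe subtree t(v) belongs to S_k. Then there is a constant C > 0 (depending only on a and ε) such that Var(X_{n,k}) ≤ C·p_k·n/k² for all n and all integers k with a·ln n ≤ k ≤ n^ε. -/

import Mathlib

open Filter Finset
open scoped Classical

/-- Ordered binary trees: every node has exactly two or no children. -/
inductive BT : Type
  | leaf : BT
  | node : BT → BT → BT
deriving DecidableEq

namespace BT

/-- The size of a binary tree: its number of leaves. -/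
def size : BT → ℕ
  | leaf => 1
  | node l r => size l + size r

/-- The multiset of all fringe subtrees of a tree (one for every node). -/
def fringe : BT → Multiset BT
  | leaf => {leaf}
  | node l r => node l r ::ₘ (fringe l + fringe r)

/-- The finset of all ordered binary trees with `n` leaves. -/
def treesOfSize : ℕ → Finset BT
  | 0 => ∅
  | 1 => {leaf}
  | n + 2 =>
    (Finset.range (n + 1)).attach.biUnion fun k =>
      ((treesOfSize (k.1 + 1)) ×ˢ (treesOfSize (n + 1 - k.1))).image fun p => node p.1 p.2
  decreasing_by
    · have := Finset.mem_range.mp k.2; omega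
    · omega

/-- Boolean test whether two ordered binary trees are isomorphic as unordered trees. -/
def isoB : BT → BT → Bool
  | leaf, leaf => true
  | leaf, node _ _ => false
  | node _ _, leaf => false
  | node l1 r1, node l2 r2 => (isoB l1 l2 && isoB r1 r2) || (isoB l1 r2 && isoB r1 l2)

/-- An injective encoding of ordered binary trees into the natural numbers. -/
def encode : BT → ℕ
  | leaf => 0
  | node l r => Nat.pair (encode l) (encode r) + 1

/-- The canonical representative of the isomorphism class of a binary tree:
two trees are isomorphic (equal as unordered trees) iff their canonical forms agree. -/
def canon : BT → BT
  | leaf => leaf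
  | node l r =>
    let l' := canon l
    let r' := canon r
    if encode l' ≤ encode r' then node l' r' else node r' l'

/-- Number of isomorphism classes of unordered binary trees represented among
the fringe subtrees of `t`. -/
def isoClasses (t : BT) : ℕ := ((fringe t).toFinset.image canon).card

/-- Number of distinct ordered binary trees occurring among the fringe subtrees of `t`. -/
def numDistinct (t : BT) : ℕ := (fringe t).toFinset.card

/-- The probability of a tree under the binary search tree model. -/
noncomputable def pbst (t : BT) : ℝ :=
  ((fringe t).map fun s => if 1 < size s then (1 : ℝ) / ((size s : ℝ) - 1) else 1).prod

/-- Expectation of `f` under the uniform distribution on trees with `n` leaves. -/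
noncomputable def unifE (n : ℕ) (f : BT → ℝ) : ℝ :=
  (∑ t ∈ treesOfSize n, f t) / (treesOfSize n).card

/-- Probability of an event under the uniform distribution on trees with `n` leaves. -/
noncomputable def unifP (n : ℕ) (p : BT → Prop) : ℝ :=
  ((treesOfSize n).filter p).card / (treesOfSize n).card

/-- Expectation of `f` under the binary search tree distribution on trees with `n` leaves. -/
noncomputable def bstE (n : ℕ) (f : BT → ℝ) : ℝ :=
  ∑ t ∈ treesOfSize n, pbst t * f t

/-- Probability of an event under the binary search tree distribution on trees with `n` leaves. -/
noncomputable def bstP (n : ℕ) (p : BT → Prop) : ℝ :=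
  ∑ t ∈ (treesOfSize n).filter p, pbst t

end BT

section Aux
open BT

lemma BT.size_pos (t : BT) : 0 < t.size := by
  induction t with
  | leaf => simp [size]
  | node l r ihl ihr => simp [size]; omega

lemma treesOfSize_zero : treesOfSize 0 = ∅ := by rw [treesOfSize]

lemma treesOfSize_one : treesOfSize 1 = {leaf} := by rw [treesOfSize]

lemma treesOfSize_succ_succ (n : ℕ) : treesOfSize (n+2) =
    (Finset.range (n + 1)).attach.biUnion fun k =>
      ((treesOfSize (k.1 + 1)) ×ˢ (treesOfSize (n + 1 - k.1))).image fun p => node p.1 p.2 := by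
  rw [treesOfSize]

lemma mem_treesOfSize : ∀ n t, t ∈ treesOfSize n ↔ BT.size t = n := by
  intro n
  induction n using Nat.strong_induction_on with
  | _ n ih =>
    intro t
    match n with
    | 0 =>
      simp only [treesOfSize_zero, Finset.notMem_empty, false_iff]
      exact fun hh => absurd hh (Nat.pos_iff_ne_zero.mp t.size_pos)
    | 1 =>
      simp [treesOfSize_one]
      constructor
      · rintro rfl; rfl
      · intro h
        cases t with
        | leaf => rfl
        | node l r =>
          exfalso
          have := l.size_pos; have := r.size_pos
          simp [size] at h; omega
    | (m + 2) =>
      rw [treesOfSize_succ_succ]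
      simp only [Finset.mem_biUnion, Finset.mem_attach, Finset.mem_image, Finset.mem_product,
        true_and, Subtype.exists, Finset.mem_range]
      constructor
      · rintro ⟨j, hj, ⟨l, r⟩, ⟨hl, hr⟩, rfl⟩
        have hl' := (ih (j+1) (by omega) l).mp hl
        have hr' := (ih (m+1-j) (by omega) r).mp hr
        simp [size, hl', hr']; omega
      · intro h
        cases t with
        | leaf => simp [size] at h
        | node l r =>
          have hl := l.size_pos; have hr := r.size_pos
          simp only [size] at h
          refine ⟨l.size - 1, by omega, ⟨l, r⟩, ⟨?_, ?_⟩, rfl⟩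
          · rw [ih (l.size - 1 + 1) (by omega)]; show l.size = _; omega
          · rw [ih (m + 1 - (l.size - 1)) (by omega)]; show r.size = _; omega

end Aux

section Aux2
open BT

lemma sum_sum_mul (c : ℝ) (s t : Finset BT) (f g : BT → ℝ) :
    ∑ l ∈ s, ∑ r ∈ t, c * (f l * g r) = c * ((∑ l ∈ s, f l) * (∑ r ∈ t, g r)) := by
  rw [Finset.sum_mul_sum, Finset.mul_sum]
  exact Finset.sum_congr rfl fun l _ => by rw [Finset.mul_sum]

lemma sum_treesOfSize (n : ℕ) (F : BT → ℝ) :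
    ∑ t ∈ treesOfSize (n+2), F t
      = ∑ j ∈ Finset.range (n+1), ∑ l ∈ treesOfSize (j+1),
          ∑ r ∈ treesOfSize (n+1-j), F (node l r) := by
  rw [treesOfSize_succ_succ]
  rw [Finset.sum_biUnion]
  · rw [← Finset.sum_attach (Finset.range (n+1)) (fun j => ∑ l ∈ treesOfSize (j+1),
          ∑ r ∈ treesOfSize (n+1-j), F (node l r))]
    refine Finset.sum_congr rfl (fun j _ => ?_)
    rw [Finset.sum_image, Finset.sum_product]
    rintro ⟨l, r⟩ hp ⟨l', r'⟩ hp' h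
    simp only [node.injEq] at h
    exact Prod.ext h.1 h.2
  · rintro ⟨j, hj⟩ - ⟨j', hj'⟩ - hne
    simp only [Function.onFun]
    apply Finset.disjoint_left.mpr
    rintro t ht ht'
    simp only [Finset.mem_image, Finset.mem_product] at ht ht'
    obtain ⟨⟨l, r⟩, ⟨hl, hr⟩, rfl⟩ := ht
    obtain ⟨⟨l', r'⟩, ⟨hl', hr'⟩, he⟩ := ht'
    simp only [node.injEq] at he
    have h1 : l.size = j + 1 := (mem_treesOfSize _ _).mp hl
    have h2 : l'.size = j' + 1 := (mem_treesOfSize _ _).mp hl'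
    rw [he.1] at h2
    exact hne (Subtype.ext (show j = j' by omega))

lemma pbst_leaf : pbst leaf = 1 := by simp [pbst, fringe, size]

lemma pbst_node (l r : BT) :
    pbst (node l r) = 1 / ((l.size + r.size : ℝ) - 1) * (pbst l * pbst r) := by
  have h : 1 < size (node l r) := by
    have := l.size_pos; have := r.size_pos; simp [size]; omega
  simp only [pbst, fringe, Multiset.map_cons, Multiset.prod_cons, Multiset.map_add,
    Multiset.prod_add, h, if_pos]
  simp only [size]
  push_cast
  ring

lemma pbst_nonneg (t : BT) : 0 ≤ pbst t := by
  induction t with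
  | leaf => rw [pbst_leaf]; norm_num
  | node l r ihl ihr =>
    rw [pbst_node]
    have h2 : (1:ℝ) ≤ (l.size:ℝ) := by exact_mod_cast l.size_pos
    have h3 : (1:ℝ) ≤ (r.size:ℝ) := by exact_mod_cast r.size_pos
    have h1 : (0:ℝ) ≤ 1 / ((l.size + r.size : ℝ) - 1) := by
      apply div_nonneg; norm_num; push_cast; linarith
    exact mul_nonneg h1 (mul_nonneg ihl ihr)

lemma pbst_node' {m j : ℕ} (hj : j < m + 1) {l r : BT}
    (hl : l ∈ treesOfSize (j+1)) (hr : r ∈ treesOfSize (m+1-j)) :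
    pbst (node l r) = 1/((m:ℝ)+1) * (pbst l * pbst r) := by
  rw [pbst_node, (mem_treesOfSize _ _).mp hl, (mem_treesOfSize _ _).mp hr,
    Nat.cast_sub (show j ≤ m+1 by omega)]
  push_cast
  ring_nf

lemma sum_pbst : ∀ n : ℕ, ∑ t ∈ treesOfSize (n+1), pbst t = 1 := by
  intro n
  induction n using Nat.strong_induction_on with
  | _ n ih =>
    match n with
    | 0 => simp [treesOfSize_one, pbst_leaf]
    | (m + 1) =>
      rw [show m + 1 + 1 = m + 2 from rfl, sum_treesOfSize]
      have key : ∀ j ∈ Finset.range (m+1), ∑ l ∈ treesOfSize (j+1),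
          ∑ r ∈ treesOfSize (m+1-j), pbst (node l r) = 1 / ((m:ℝ)+1) := by
        intro j hj
        have hj' := Finset.mem_range.mp hj
        calc ∑ l ∈ treesOfSize (j+1), ∑ r ∈ treesOfSize (m+1-j), pbst (node l r)
            = ∑ l ∈ treesOfSize (j+1), ∑ r ∈ treesOfSize (m+1-j),
                1/((m:ℝ)+1) * (pbst l * pbst r) :=
              Finset.sum_congr rfl fun l hl => Finset.sum_congr rfl fun r hr =>
                pbst_node' hj' hl hr
          _ = 1/((m:ℝ)+1) * ((∑ l ∈ treesOfSize (j+1), pbst l) *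
                (∑ r ∈ treesOfSize (m+1-j), pbst r)) := sum_sum_mul _ _ _ _ _
          _ = 1/((m:ℝ)+1) := by
              rw [ih j (by omega), show m + 1 - j = (m - j) + 1 by omega, ih (m-j) (by omega)]
              ring
      rw [Finset.sum_congr rfl key, Finset.sum_const, Finset.card_range, nsmul_eq_mul]
      push_cast
      field_simp
end Aux2

section Aux3
open BT

variable (S : ℕ → Finset BT) (hS : ∀ k, S k ⊆ treesOfSize k) (k : ℕ)

/-- number of fringe subtrees in `S k` -/
noncomputable def cnt (t : BT) : ℕ := Multiset.countP (· ∈ S k) (fringe t)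

include hS

omit hS in
lemma cnt_leaf : cnt S k leaf = if leaf ∈ S k then 1 else 0 := by
  rw [cnt]
  show Multiset.countP _ (leaf ::ₘ 0) = _
  rw [Multiset.countP_cons]
  simp

omit hS in
lemma cnt_node (l r : BT) :
    cnt S k (node l r) = (if node l r ∈ S k then 1 else 0) + cnt S k l + cnt S k r := by
  simp only [cnt, fringe, Multiset.countP_cons, Multiset.countP_add]
  ring

lemma size_of_mem_S {t : BT} (ht : t ∈ S k) : t.size = k :=
  (mem_treesOfSize _ _).mp (hS k ht)

omit hS in
lemma size_le_of_mem_fringe : ∀ t s : BT, s ∈ fringe t → s.size ≤ t.size := by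
  intro t
  induction t with
  | leaf => intro s hs; simp [fringe] at hs; subst hs; rfl
  | node l r ihl ihr =>
    intro s hs
    simp only [fringe, Multiset.mem_cons, Multiset.mem_add] at hs
    have hl := l.size_pos; have hr := r.size_pos
    rcases hs with rfl | hs | hs
    · rfl
    · have := ihl s hs; simp [size]; omega
    · have := ihr s hs; simp [size]; omega

lemma cnt_eq_zero {t : BT} (ht : t.size < k) : cnt S k t = 0 := by
  rw [cnt, Multiset.countP_eq_zero]
  intro s hs hsS
  have := size_le_of_mem_fringe t s hs
  have := size_of_mem_S S hS k hsS
  omega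

lemma k_mul_cnt_le (t : BT) : k * cnt S k t ≤ t.size := by
  induction t with
  | leaf =>
    rw [cnt_leaf]
    by_cases h : leaf ∈ S k
    · have : (leaf : BT).size = k := size_of_mem_S S hS k h
      simp [h, size] at this ⊢; omega
    · simp [h, size]
  | node l r ihl ihr =>
    rw [cnt_node]
    have hl := l.size_pos; have hr := r.size_pos
    by_cases h : node l r ∈ S k
    · have hsz : (node l r).size = k := size_of_mem_S S hS k h
      simp only [size] at hsz
      have h1 : cnt S k l = 0 := cnt_eq_zero S hS k (by omega)
      have h2 : cnt S k r = 0 := cnt_eq_zero S hS k (by omega)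
      simp [h, h1, h2, size]; omega
    · simp only [h, if_false, Nat.zero_add, size]
      have := Nat.mul_add k (cnt S k l) (cnt S k r)
      omega

lemma cnt_le_one {t : BT} (hk : 0 < k) (ht : t.size < 2 * k) : cnt S k t ≤ 1 := by
  have h1 := k_mul_cnt_le S hS k t
  by_contra h
  push_neg at h
  have : k * 2 ≤ k * cnt S k t := Nat.mul_le_mul_left k h
  omega

lemma cnt_of_size_eq {t : BT} (hk : 0 < k) (ht : t.size = k) :
    cnt S k t = if t ∈ S k then 1 else 0 := by
  cases t with
  | leaf => rw [cnt_leaf]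
  | node l r =>
    have hl := l.size_pos; have hr := r.size_pos
    simp only [size] at ht
    rw [cnt_node, cnt_eq_zero S hS k (by omega), cnt_eq_zero S hS k (by omega)]
    simp

end Aux3

section Aux4
open BT

/-- mean sequence: `E[X_n] = p_k * Pc k n` -/
noncomputable def Pc (k n : ℕ) : ℝ :=
  if n < k then 0 else if n = k then 1 else 2*(n:ℝ)/((k:ℝ)*((k:ℝ)+1))

/-- second-moment majorant -/
noncomputable def phiF (k n : ℕ) : ℝ :=
  if n < 2*k then 0 else (2/((k:ℝ)*((k:ℝ)+1)))^2*(n:ℝ)^2 + (n:ℝ)/(k:ℝ)^2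

lemma Pc_nonneg (k n : ℕ) : 0 ≤ Pc k n := by
  rw [Pc]
  split
  · norm_num
  split
  · norm_num
  positivity

lemma sum_Pc (k : ℕ) (hk : 0 < k) : ∀ N : ℕ,
    ∑ j ∈ Finset.range N, Pc k (j+1)
      = if N < k then 0 else ((N:ℝ)+1)*(N:ℝ)/((k:ℝ)*((k:ℝ)+1)) := by
  intro N
  induction N with
  | zero => simp [hk]
  | succ N ihN =>
    rw [Finset.sum_range_succ, ihN]
    rcases lt_trichotomy (N+1) k with h | h | h
    · rw [if_pos (by omega), if_pos (by omega), Pc, if_pos (by omega)]; ring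
    · rw [if_pos (by omega), if_neg (by omega), Pc, if_neg (by omega), if_pos (by omega)]
      have hNk : (k:ℝ) = (N:ℝ) + 1 := by exact_mod_cast (congrArg Nat.cast h.symm)
      push_cast
      rw [hNk, show ((N:ℝ)+1+1)*((N:ℝ)+1) = ((N:ℝ)+1)*(((N:ℝ)+1)+1) from by ring,
        div_self (by positivity)]
      norm_num
    · rw [if_neg (by omega), if_neg (by omega), Pc, if_neg (by omega), if_neg (by omega)]
      have hk1 : (0:ℝ) < (k:ℝ)*((k:ℝ)+1) := by positivity
      push_cast
      field_simp
      ring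
end Aux4

section Aux5
open BT

lemma phiF_nonneg (k n : ℕ) : 0 ≤ phiF k n := by
  rw [phiF]
  split
  · norm_num
  positivity

/-- closed form of `∑_{j<N} phiF k (j+1)` for `N ≥ 2k` -/
noncomputable def SPhi (k N : ℕ) : ℝ :=
  (2/((k:ℝ)*((k:ℝ)+1)))^2 *
      ((N:ℝ)*((N:ℝ)+1)*(2*(N:ℝ)+1)/6 - (2*(k:ℝ)-1)*(2*(k:ℝ))*(4*(k:ℝ)-1)/6)
    + ((N:ℝ)*((N:ℝ)+1)/2 - (2*(k:ℝ)-1)*(k:ℝ))/(k:ℝ)^2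

lemma sum_phiF (k : ℕ) (hk : 0 < k) : ∀ N : ℕ,
    ∑ j ∈ Finset.range N, phiF k (j+1) = if N < 2*k then 0 else SPhi k N := by
  intro N
  induction N with
  | zero => simp [hk]
  | succ N ihN =>
    rw [Finset.sum_range_succ, ihN]
    rcases lt_trichotomy (N+1) (2*k) with h | h | h
    · rw [if_pos (by omega), if_pos (by omega), phiF, if_pos (by omega)]; ring
    · rw [if_pos (by omega), if_neg (by omega), phiF, if_neg (by omega), SPhi]
      have hNk : ((N:ℝ) + 1) = 2*(k:ℝ) := by exact_mod_cast congrArg Nat.cast h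
      have hk0 : ((k:ℝ)) ≠ 0 := by positivity
      have hk1 : ((k:ℝ)+1) ≠ 0 := by positivity
      push_cast
      rw [show ((N:ℝ)) = 2*(k:ℝ) - 1 from by linarith]
      field_simp
      ring
    · rw [if_neg (by omega), if_neg (by omega), phiF, if_neg (by omega), SPhi, SPhi]
      have hk0 : ((k:ℝ)) ≠ 0 := by positivity
      have hk1 : ((k:ℝ)+1) ≠ 0 := by positivity
      push_cast
      field_simp
      ring
end Aux5

section Aux6
open BT

lemma sum_range_cast (N : ℕ) : ∑ j ∈ Finset.range N, (j:ℝ) = (N:ℝ)*((N:ℝ)-1)/2 := by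
  induction N with
  | zero => simp
  | succ N ih => rw [Finset.sum_range_succ, ih]; push_cast; ring

lemma sum_range_sq_cast (N : ℕ) :
    ∑ j ∈ Finset.range N, (j:ℝ)^2 = (N:ℝ)*((N:ℝ)-1)*(2*(N:ℝ)-1)/6 := by
  induction N with
  | zero => simp
  | succ N ih => rw [Finset.sum_range_succ, ih]; push_cast; ring

/-- deviation of `Pc` from linearity -/
noncomputable def Dc (k n : ℕ) : ℝ := Pc k n - 2*(n:ℝ)/((k:ℝ)*((k:ℝ)+1))

lemma Dc_eq_zero {k n : ℕ} (h : k < n) : Dc k n = 0 := by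
  rw [Dc, Pc, if_neg (by omega), if_neg (by omega)]; ring

lemma Dc_split (k n : ℕ) (hk : 0 < k) :
    Dc k n = (if n = k then 1 else 0) - (if n ≤ k then 2*(n:ℝ)/((k:ℝ)*((k:ℝ)+1)) else 0) := by
  rw [Dc, Pc]
  rcases lt_trichotomy n k with h | h | h
  · rw [if_pos (by omega), if_neg (by omega), if_pos (by omega)]
    try ring
  · rw [if_neg (by omega), if_pos h, if_pos h, if_pos (by omega)]
    try ring
  · rw [if_neg (by omega), if_neg (by omega), if_neg (by omega), if_neg (by omega)]
    try ring

/-- weighted sum of the deviation -/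
lemma sum_weight_Dc (k N : ℕ) (hk : 0 < k) (hkN : k ≤ N) :
    ∑ j ∈ Finset.range N, ((N-j : ℕ):ℝ) * Dc k (j+1)
      = ((N:ℝ)-(k:ℝ)+1)
        - 2/((k:ℝ)*((k:ℝ)+1)) * ((N:ℝ)*((k:ℝ)*((k:ℝ)-1)/2) + (N:ℝ)*(k:ℝ)
            - (k:ℝ)*((k:ℝ)-1)*(2*(k:ℝ)-1)/6 - (k:ℝ)*((k:ℝ)-1)/2) := by
  have hsplit : ∀ j ∈ Finset.range N, ((N-j : ℕ):ℝ) * Dc k (j+1)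
      = ((N-j : ℕ):ℝ) * (if j+1 = k then 1 else 0)
        - (if j < k then ((N-j : ℕ):ℝ) * (2*((j:ℝ)+1)/((k:ℝ)*((k:ℝ)+1))) else 0) := by
    intro j hj
    rw [Dc_split k (j+1) hk]
    push_cast
    rcases lt_trichotomy (j+1) k with h | h | h
    · rw [if_neg (by omega), if_pos (by omega), if_pos (by omega)]; ring
    · rw [if_pos h, if_pos (by omega), if_pos (by omega)]; ring
    · rw [if_neg (by omega), if_neg (by omega), if_neg (by omega)]; ring
  rw [Finset.sum_congr rfl hsplit, Finset.sum_sub_distrib]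
  have h1 : ∑ j ∈ Finset.range N, ((N-j : ℕ):ℝ) * (if j+1 = k then 1 else 0)
      = ((N:ℝ)-(k:ℝ)+1) := by
    have : ∀ j ∈ Finset.range N, ((N-j : ℕ):ℝ) * (if j+1 = k then 1 else 0)
        = if j = k-1 then ((N-(k-1) : ℕ):ℝ) else 0 := by
      intro j hj
      rcases eq_or_ne j (k-1) with rfl | h
      · rw [if_pos rfl, if_pos (by omega)]; ring
      · rw [if_neg h, if_neg (by omega)]; ring
    rw [Finset.sum_congr rfl this, Finset.sum_ite_eq' (Finset.range N) (k-1)]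
    rw [if_pos (Finset.mem_range.mpr (by omega)), Nat.cast_sub (by omega)]
    push_cast [Nat.cast_sub (by omega : 1 ≤ k)]
    ring
  have h2 : ∑ j ∈ Finset.range N, (if j < k then ((N-j : ℕ):ℝ)
        * (2*((j:ℝ)+1)/((k:ℝ)*((k:ℝ)+1))) else 0)
      = 2/((k:ℝ)*((k:ℝ)+1)) * ((N:ℝ)*((k:ℝ)*((k:ℝ)-1)/2) + (N:ℝ)*(k:ℝ)
            - (k:ℝ)*((k:ℝ)-1)*(2*(k:ℝ)-1)/6 - (k:ℝ)*((k:ℝ)-1)/2) := by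
    rw [← Finset.sum_subset (Finset.range_subset_range.mpr hkN)
      (by intro j _ hj; rw [if_neg (by simp at hj; omega)])]
    have : ∀ j ∈ Finset.range k, (if j < k then ((N-j : ℕ):ℝ)
          * (2*((j:ℝ)+1)/((k:ℝ)*((k:ℝ)+1))) else 0)
        = 2/((k:ℝ)*((k:ℝ)+1)) * (((N:ℝ)*(j:ℝ) + (N:ℝ)) - ((j:ℝ)^2 + (j:ℝ))) := by
      intro j hj
      have hjk := Finset.mem_range.mp hj
      rw [if_pos hjk, Nat.cast_sub (by omega)]
      field_simp
    rw [Finset.sum_congr rfl this, ← Finset.mul_sum]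
    congr 1
    rw [Finset.sum_sub_distrib, Finset.sum_add_distrib, Finset.sum_add_distrib,
      ← Finset.mul_sum, sum_range_cast, sum_range_sq_cast, Finset.sum_const,
      Finset.card_range, nsmul_eq_mul]
    ring
  rw [h1, h2]

end Aux6

section Aux7
open BT

lemma Tconv (k N : ℕ) (hk : 0 < k) (hN : 2*k ≤ N) :
    ∑ j ∈ Finset.range N, Pc k (j+1) * Pc k (N-j)
      = (2/((k:ℝ)*((k:ℝ)+1)))^2 * ((N:ℝ)*(N:ℝ) + ((N:ℝ)-1)*((N:ℝ)*((N:ℝ)-1)/2)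
          - ((N:ℝ)-1)*(N:ℝ)*(2*(N:ℝ)-1)/6)
        + 2 * (2/((k:ℝ)*((k:ℝ)+1))) *
          (((N:ℝ)-(k:ℝ)+1)
            - 2/((k:ℝ)*((k:ℝ)+1)) * ((N:ℝ)*((k:ℝ)*((k:ℝ)-1)/2) + (N:ℝ)*(k:ℝ)
                - (k:ℝ)*((k:ℝ)-1)*(2*(k:ℝ)-1)/6 - (k:ℝ)*((k:ℝ)-1)/2)) := by
  set b : ℝ := 2/((k:ℝ)*((k:ℝ)+1)) with hb
  have hterm : ∀ j ∈ Finset.range N, Pc k (j+1) * Pc k (N-j)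
      = b^2 * (((j:ℝ)+1) * ((N-j : ℕ):ℝ))
        + b * (((N-j : ℕ):ℝ) * Dc k (j+1)) + b * (((j:ℝ)+1) * Dc k (N-j)) := by
    intro j hj
    have hj' := Finset.mem_range.mp hj
    have hP1 : Pc k (j+1) = b * ((j:ℝ)+1) + Dc k (j+1) := by
      rw [Dc]; push_cast; ring
    have hP2 : Pc k (N-j) = b * ((N-j : ℕ):ℝ) + Dc k (N-j) := by
      rw [Dc]; ring
    have hDD : Dc k (j+1) * Dc k (N-j) = 0 := by
      rcases lt_or_ge k (j+1) with h | h
      · rw [Dc_eq_zero h]; ring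
      · rw [Dc_eq_zero (show k < N-j by omega)]; ring
    rw [hP1, hP2]
    nlinarith [hDD]
  rw [Finset.sum_congr rfl hterm, Finset.sum_add_distrib, Finset.sum_add_distrib]
  have hA : ∑ j ∈ Finset.range N, b^2 * (((j:ℝ)+1) * ((N-j : ℕ):ℝ))
      = b^2 * ((N:ℝ)*(N:ℝ) + ((N:ℝ)-1)*((N:ℝ)*((N:ℝ)-1)/2)
          - ((N:ℝ)-1)*(N:ℝ)*(2*(N:ℝ)-1)/6) := by
    have : ∀ j ∈ Finset.range N, b^2 * (((j:ℝ)+1) * ((N-j : ℕ):ℝ))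
        = b^2 * ((N:ℝ) + (j:ℝ)*((N:ℝ)-1) - (j:ℝ)^2) := by
      intro j hj
      have hj' := Finset.mem_range.mp hj
      rw [Nat.cast_sub (by omega)]
      ring
    rw [Finset.sum_congr rfl this, ← Finset.mul_sum]
    congr 1
    rw [Finset.sum_sub_distrib, Finset.sum_add_distrib, ← Finset.sum_mul,
      sum_range_cast, sum_range_sq_cast, Finset.sum_const, Finset.card_range, nsmul_eq_mul]
    ring
  have hB : ∑ j ∈ Finset.range N, b * (((N-j : ℕ):ℝ) * Dc k (j+1))
      = b * (((N:ℝ)-(k:ℝ)+1)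
            - b * ((N:ℝ)*((k:ℝ)*((k:ℝ)-1)/2) + (N:ℝ)*(k:ℝ)
                - (k:ℝ)*((k:ℝ)-1)*(2*(k:ℝ)-1)/6 - (k:ℝ)*((k:ℝ)-1)/2)) := by
    rw [← Finset.mul_sum, sum_weight_Dc k N hk (by omega)]
  have hC : ∑ j ∈ Finset.range N, b * (((j:ℝ)+1) * Dc k (N-j))
      = ∑ j ∈ Finset.range N, b * (((N-j : ℕ):ℝ) * Dc k (j+1)) := by
    have := Finset.sum_range_reflect (fun j => b * (((N-j : ℕ):ℝ) * Dc k (j+1))) N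
    rw [← this]
    refine Finset.sum_congr rfl fun j hj => ?_
    have hj' := Finset.mem_range.mp hj
    have e1 : N - (N - 1 - j) = j+1 := by omega
    have e2 : N - 1 - j + 1 = N - j := by omega
    rw [e1, e2]
    push_cast
    ring
  rw [hA, hB, hC, hB]
  ring

lemma key_ineq (k N : ℕ) (hk : 0 < k) (hN : 2*k ≤ N) :
    2 * (∑ j ∈ Finset.range N, phiF k (j+1))
      + 2 * (∑ j ∈ Finset.range N, Pc k (j+1) * Pc k (N-j))
      ≤ (N:ℝ) * phiF k (N+1) := by
  rw [sum_phiF k hk N, if_neg (by omega), Tconv k N hk hN, SPhi, phiF, if_neg (by omega)]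
  have hk1 : (1:ℝ) ≤ (k:ℝ) := by exact_mod_cast hk
  have hk0 : ((k:ℝ)) ≠ 0 := by positivity
  have hk2 : ((k:ℝ)+1) ≠ 0 := by positivity
  have hmain : (N:ℝ) * ((2/((k:ℝ)*((k:ℝ)+1)))^2*((N:ℝ)+1)^2 + ((N:ℝ)+1)/(k:ℝ)^2)
      - (2 * ((2/((k:ℝ)*((k:ℝ)+1)))^2 *
      (((N:ℝ))*(((N:ℝ))+1)*(2*((N:ℝ))+1)/6 - (2*(k:ℝ)-1)*(2*(k:ℝ))*(4*(k:ℝ)-1)/6)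
      + (((N:ℝ))*(((N:ℝ))+1)/2 - (2*(k:ℝ)-1)*(k:ℝ))/(k:ℝ)^2)
      + 2 * ((2/((k:ℝ)*((k:ℝ)+1)))^2 * ((N:ℝ)*(N:ℝ) + ((N:ℝ)-1)*((N:ℝ)*((N:ℝ)-1)/2)
          - ((N:ℝ)-1)*(N:ℝ)*(2*(N:ℝ)-1)/6)
        + 2 * (2/((k:ℝ)*((k:ℝ)+1))) *
          (((N:ℝ)-(k:ℝ)+1)
            - 2/((k:ℝ)*((k:ℝ)+1)) * ((N:ℝ)*((k:ℝ)*((k:ℝ)-1)/2) + (N:ℝ)*(k:ℝ)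
                - (k:ℝ)*((k:ℝ)-1)*(2*(k:ℝ)-1)/6 - (k:ℝ)*((k:ℝ)-1)/2))))
      = (4*(k:ℝ)^4 + 30*(k:ℝ)^3 - 16*(k:ℝ)^2 - 2*(k:ℝ)) / ((k:ℝ)^2*((k:ℝ)+1)^2) := by
    field_simp
    ring
  have hc : 0 ≤ (4*(k:ℝ)^4 + 30*(k:ℝ)^3 - 16*(k:ℝ)^2 - 2*(k:ℝ)) / ((k:ℝ)^2*((k:ℝ)+1)^2) := by
    apply div_nonneg _ (by positivity)
    nlinarith [hk1, sq_nonneg ((k:ℝ)-1)]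
  push_cast
  linarith [hmain, hc]
end Aux7

section Aux8
open BT

variable (S : ℕ → Finset BT) (hS : ∀ k, S k ⊆ treesOfSize k) (k : ℕ) (hk : 0 < k)

include hS

lemma ind_sum (m : ℕ) :
    ∑ t ∈ treesOfSize m, pbst t * (if t ∈ S k then (1:ℝ) else 0)
      = if m = k then (∑ t ∈ S k, pbst t) else 0 := by
  have h1 : ∀ t ∈ treesOfSize m, pbst t * (if t ∈ S k then (1:ℝ) else 0)
      = if t ∈ S k then pbst t else 0 := by
    intro t _
    split <;> ring
  rw [Finset.sum_congr rfl h1, ← Finset.sum_filter]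
  rcases eq_or_ne m k with rfl | h
  · rw [if_pos rfl]
    congr 1
    apply Finset.ext
    intro t
    simp only [Finset.mem_filter]
    exact ⟨fun h => h.2, fun h => ⟨hS m h, h⟩⟩
  · rw [if_neg h]
    apply Finset.sum_eq_zero
    intro t ht
    simp only [Finset.mem_filter] at ht
    exact absurd ((mem_treesOfSize _ _).mp ht.1 ▸ size_of_mem_S S hS k ht.2) h

include hk

lemma E1 : ∀ m : ℕ, bstE (m+1) (fun t => (cnt S k t : ℝ))
    = (∑ t ∈ S k, pbst t) * Pc k (m+1) := by
  intro m
  induction m using Nat.strong_induction_on with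
  | _ m ih =>
    match m with
    | 0 =>
      rw [bstE, treesOfSize_one, Finset.sum_singleton, pbst_leaf, cnt_leaf S k]
      rcases eq_or_ne k 1 with rfl | h
      · have hPc : Pc 1 (0+1) = 1 := by rw [Pc]; norm_num
        rw [hPc]
        rcases Finset.subset_singleton_iff.mp (treesOfSize_one ▸ hS 1) with h0 | h0 <;>
          simp [h0, pbst_leaf]
      · have hPc : Pc k (0+1) = 0 := by
          rw [Pc, if_pos (show 0+1 < k by omega)]
        have hlf : leaf ∉ S k := fun hmem => h ((size_of_mem_S S hS k hmem).symm.trans rfl)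
        rw [if_neg hlf, hPc]
        simp
    | (w + 1) =>
      set p : ℝ := ∑ t ∈ S k, pbst t with hp
      set c : ℝ := 1/((w:ℝ)+1) with hc
      rw [show w + 1 + 1 = w + 2 from rfl, bstE, sum_treesOfSize]
      have hinner : ∀ j ∈ Finset.range (w+1),
          (∑ l ∈ treesOfSize (j+1), ∑ r ∈ treesOfSize (w+1-j),
            pbst (node l r) * ((cnt S k (node l r) : ℝ)))
          = (∑ l ∈ treesOfSize (j+1), ∑ r ∈ treesOfSize (w+1-j),
              pbst (node l r) * (if node l r ∈ S k then (1:ℝ) else 0))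
            + (c * (p * Pc k (j+1)) + c * (p * Pc k (w+1-j))) := by
        intro j hj
        have hj' := Finset.mem_range.mp hj
        have hpt : ∀ l ∈ treesOfSize (j+1), ∀ r ∈ treesOfSize (w+1-j),
            pbst (node l r) * ((cnt S k (node l r) : ℝ))
            = pbst (node l r) * (if node l r ∈ S k then (1:ℝ) else 0)
              + (c * ((pbst l * (cnt S k l : ℝ)) * pbst r)
                + c * (pbst l * (pbst r * (cnt S k r : ℝ)))) := by
          intro l hl r hr
          have hnode := pbst_node' hj' hl hr
          rw [cnt_node S k l r]
          push_cast
          rw [hnode]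
          ring
        rw [Finset.sum_congr rfl (fun l hl => Finset.sum_congr rfl (fun r hr => hpt l hl r hr)),
          Finset.sum_congr rfl (fun l (hl : l ∈ treesOfSize (j+1)) => Finset.sum_add_distrib),
          Finset.sum_add_distrib,
          Finset.sum_congr rfl (fun l (hl : l ∈ treesOfSize (j+1)) => Finset.sum_add_distrib),
          Finset.sum_add_distrib, sum_sum_mul, sum_sum_mul]
        congr 2
        · rw [show (∑ l ∈ treesOfSize (j+1), pbst l * (cnt S k l : ℝ))
              = bstE (j+1) (fun t => (cnt S k t : ℝ)) from rfl,
            ih j (by omega), show w + 1 - j = (w - j) + 1 by omega, sum_pbst (w-j)]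
          ring
        · rw [show (∑ r ∈ treesOfSize (w+1-j), pbst r * (cnt S k r : ℝ))
              = bstE (w+1-j) (fun t => (cnt S k t : ℝ)) from rfl,
            show w + 1 - j = (w - j) + 1 by omega, ih (w-j) (by omega), sum_pbst j]
          ring
      rw [Finset.sum_congr rfl hinner, Finset.sum_add_distrib,
        ← sum_treesOfSize w (fun t => pbst t * (if t ∈ S k then (1:ℝ) else 0)),
        ind_sum S hS k, Finset.sum_add_distrib]
      have hrefl : ∑ j ∈ Finset.range (w+1), c * (p * Pc k (w+1-j))
          = ∑ j ∈ Finset.range (w+1), c * (p * Pc k (j+1)) := by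
        rw [← Finset.sum_range_reflect (fun j => c * (p * Pc k (j+1))) (w+1)]
        exact Finset.sum_congr rfl fun j hj => by
          rw [show w + 1 - 1 - j + 1 = w + 1 - j by
            have := Finset.mem_range.mp hj; omega]
      rw [hrefl, ← Finset.sum_add_distrib]
      have : ∀ j ∈ Finset.range (w+1), c * (p * Pc k (j+1)) + c * (p * Pc k (j+1))
          = (2*c*p) * Pc k (j+1) := fun j _ => by ring
      rw [Finset.sum_congr rfl this, ← Finset.mul_sum, sum_Pc k hk (w+1)]
      have hw0 : ((w:ℝ)+1) ≠ 0 := by positivity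
      rcases lt_trichotomy (w+2) k with h | h | h
      · rw [if_neg (by omega), if_pos (by omega), Pc, if_pos (by omega)]
        ring
      · rw [if_pos (by omega), if_pos (by omega), Pc, if_neg (by omega), if_pos h]
        ring
      · rw [if_neg (by omega), if_neg (by omega), Pc, if_neg (by omega), if_neg (by omega)]
        have hkk : ((k:ℝ))*((k:ℝ)+1) ≠ 0 := by positivity
        push_cast
        rw [hc]
        field_simp
        ring
end Aux8

section Aux9
open BT

lemma Pc_lt {k n : ℕ} (h : n < k) : Pc k n = 0 := by rw [Pc, if_pos h]
lemma Pc_self (k : ℕ) : Pc k k = 1 := by rw [Pc, if_neg (by omega), if_pos rfl]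

lemma Tconv₂ (k : ℕ) (hk : 0 < k) :
    ∑ j ∈ Finset.range (2*k-1), Pc k (j+1) * Pc k (2*k-1-j) = 1 := by
  rw [Finset.sum_eq_single (k-1)]
  · rw [show k-1+1 = k by omega, show 2*k-1-(k-1) = k by omega, Pc_self]; ring
  · intro j hj hne
    have hj' := Finset.mem_range.mp hj
    rcases lt_or_ge (j+1) k with h | h
    · rw [Pc_lt h, zero_mul]
    · have : k < j + 1 := by omega
      rw [Pc_lt (show 2*k-1-j < k by omega), mul_zero]
  · intro h
    exact absurd (Finset.mem_range.mpr (by omega)) h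

lemma key_all (k N : ℕ) (hk : 0 < k) (hN : 2*k ≤ N+1) :
    2 * (∑ j ∈ Finset.range N, phiF k (j+1))
      + 2 * (∑ j ∈ Finset.range N, Pc k (j+1) * Pc k (N-j))
      ≤ (N:ℝ) * phiF k (N+1) := by
  rcases eq_or_lt_of_le hN with hEq | hLt
  · -- N + 1 = 2k
    have hN' : N = 2*k-1 := by omega
    have hcast : (N:ℝ) = 2*(k:ℝ) - 1 := by
      have : (2*k : ℕ) = N+1 := hEq
      have := congrArg (Nat.cast : ℕ → ℝ) this
      push_cast at this
      linarith
    rw [sum_phiF k hk N, if_pos (by omega)]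
    rw [show (∑ j ∈ Finset.range N, Pc k (j+1) * Pc k (N-j)) = 1 by
      rw [hN']; exact Tconv₂ k hk]
    rw [phiF, if_neg (by omega)]
    have hk1 : (1:ℝ) ≤ (k:ℝ) := by exact_mod_cast hk
    have hNk : ((N:ℕ)+1 : ℝ) = 2*(k:ℝ) := by push_cast; linarith
    push_cast
    rw [show ((N:ℝ)+1) = 2*(k:ℝ) by linarith]
    have hpos : (0:ℝ) ≤ (2*(k:ℝ)-1) * ((2/((k:ℝ)*((k:ℝ)+1)))^2*(2*(k:ℝ))^2) := by
      apply mul_nonneg (by linarith)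
      positivity
    have h2 : (2*(k:ℝ)-1) * (2*(k:ℝ)/(k:ℝ)^2) - 2 = 2*((k:ℝ)-1)/(k:ℝ) := by
      field_simp
      ring
    have h3 : (0:ℝ) ≤ 2*((k:ℝ)-1)/(k:ℝ) := by
      apply div_nonneg (by linarith) (by linarith)
    nlinarith [hpos, h2, h3]
  · exact key_ineq k N hk (by omega)

variable (S : ℕ → Finset BT) (hS : ∀ k, S k ⊆ treesOfSize k) (k : ℕ) (hk : 0 < k)

include hS hk

lemma E2 : ∀ m : ℕ, bstE (m+1) (fun t => (cnt S k t : ℝ)^2)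
    ≤ (∑ t ∈ S k, pbst t) * Pc k (m+1) + (∑ t ∈ S k, pbst t)^2 * phiF k (m+1) := by
  intro m
  induction m using Nat.strong_induction_on with
  | _ m ih =>
    rcases lt_or_ge (m+1) (2*k) with hm | hm
    · -- small sizes: the count is 0 or 1
      have hsq : bstE (m+1) (fun t => (cnt S k t : ℝ)^2)
          = bstE (m+1) (fun t => (cnt S k t : ℝ)) := by
        rw [bstE, bstE]
        refine Finset.sum_congr rfl fun t ht => ?_
        have hsz : t.size = m+1 := (mem_treesOfSize _ _).mp ht
        have hle : cnt S k t ≤ 1 := cnt_le_one S hS k hk (by omega)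
        have : cnt S k t = 0 ∨ cnt S k t = 1 := by omega
        rcases this with h | h <;> rw [h] <;> norm_num
      rw [hsq, E1 S hS k hk m, phiF, if_pos hm]
      have : (∑ t ∈ S k, pbst t)^2 * 0 = 0 := by ring
      rw [this, add_zero]
    · -- big sizes: recursion
      obtain ⟨w, rfl⟩ : ∃ w, m = w+1 := ⟨m-1, by omega⟩
      set p : ℝ := ∑ t ∈ S k, pbst t with hp
      set c : ℝ := 1/((w:ℝ)+1) with hc
      clear_value p
      have hc0 : 0 ≤ c := by rw [hc]; positivity
      have hp0 : 0 ≤ p := by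
        rw [hp]; exact Finset.sum_nonneg fun t _ => pbst_nonneg t
      have hQ : bstE (w+2) (fun t => (cnt S k t : ℝ)^2)
          = ∑ j ∈ Finset.range (w+1),
              (c * bstE (j+1) (fun t => (cnt S k t : ℝ)^2)
                + c * bstE (w+1-j) (fun t => (cnt S k t : ℝ)^2)
                + 2*c*p^2*(Pc k (j+1) * Pc k (w+1-j))) := by
        rw [bstE, sum_treesOfSize]
        refine Finset.sum_congr rfl fun j hj => ?_
        have hj' := Finset.mem_range.mp hj
        have hpt : ∀ l ∈ treesOfSize (j+1), ∀ r ∈ treesOfSize (w+1-j),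
            pbst (node l r) * ((cnt S k (node l r) : ℝ))^2
            = c * ((pbst l * (cnt S k l : ℝ)^2) * pbst r)
              + c * (pbst l * (pbst r * (cnt S k r : ℝ)^2))
              + 2*c*((pbst l * (cnt S k l : ℝ)) * (pbst r * (cnt S k r : ℝ))) := by
          intro l hl r hr
          have hnode := pbst_node' hj' hl hr
          have hsz : (node l r).size = w+2 := by
            show l.size + r.size = w+2
            rw [(mem_treesOfSize _ _).mp hl, (mem_treesOfSize _ _).mp hr]
            omega
          have hnotmem : node l r ∉ S k := fun hmem => by
            have := size_of_mem_S S hS k hmem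
            omega
          rw [cnt_node S k l r, if_neg hnotmem]
          push_cast
          rw [hnode]
          ring
        rw [Finset.sum_congr rfl (fun l hl => Finset.sum_congr rfl (fun r hr => hpt l hl r hr)),
          Finset.sum_congr rfl (fun l (hl : l ∈ treesOfSize (j+1)) => Finset.sum_add_distrib),
          Finset.sum_add_distrib,
          Finset.sum_congr rfl (fun l (hl : l ∈ treesOfSize (j+1)) => Finset.sum_add_distrib),
          Finset.sum_add_distrib, sum_sum_mul, sum_sum_mul, sum_sum_mul]
        have e1 : (∑ r ∈ treesOfSize (w+1-j), pbst r) = 1 := by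
          rw [show w+1-j = (w-j)+1 by omega]; exact sum_pbst _
        have e2 : (∑ l ∈ treesOfSize (j+1), pbst l) = 1 := sum_pbst j
        have e3 : (∑ l ∈ treesOfSize (j+1), pbst l * (cnt S k l : ℝ)) = p * Pc k (j+1) := by
          rw [hp]; exact E1 S hS k hk j
        have e4 : (∑ r ∈ treesOfSize (w+1-j), pbst r * (cnt S k r : ℝ)) = p * Pc k (w+1-j) := by
          rw [hp, show w+1-j = (w-j)+1 by omega]; exact E1 S hS k hk (w-j)
        have e5 : (∑ l ∈ treesOfSize (j+1), pbst l * (cnt S k l : ℝ)^2)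
            = bstE (j+1) (fun t => (cnt S k t : ℝ)^2) := rfl
        have e6 : (∑ r ∈ treesOfSize (w+1-j), pbst r * (cnt S k r : ℝ)^2)
            = bstE (w+1-j) (fun t => (cnt S k t : ℝ)^2) := rfl
        rw [e1, e2, e3, e4, e5, e6]
        ring
      have hQb : bstE (w+2) (fun t => (cnt S k t : ℝ)^2)
          ≤ ∑ j ∈ Finset.range (w+1),
              (c * (p * Pc k (j+1) + p^2 * phiF k (j+1))
                + c * (p * Pc k (w+1-j) + p^2 * phiF k (w+1-j))
                + 2*c*p^2*(Pc k (j+1) * Pc k (w+1-j))) := by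
        rw [hQ]
        refine Finset.sum_le_sum fun j hj => ?_
        have hj' := Finset.mem_range.mp hj
        have h1 : bstE (j+1) (fun t => (cnt S k t : ℝ)^2)
            ≤ p * Pc k (j+1) + p^2 * phiF k (j+1) := ih j (by omega)
        have h2 : bstE (w+1-j) (fun t => (cnt S k t : ℝ)^2)
            ≤ p * Pc k (w+1-j) + p^2 * phiF k (w+1-j) := by
          rw [show w + 1 - j = (w - j) + 1 by omega]
          exact ih (w-j) (by omega)
        have := mul_le_mul_of_nonneg_left h1 hc0
        have := mul_le_mul_of_nonneg_left h2 hc0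
        linarith
      have hrefl2 : ∑ j ∈ Finset.range (w+1), c * (p * Pc k (w+1-j) + p^2 * phiF k (w+1-j))
          = ∑ j ∈ Finset.range (w+1), c * (p * Pc k (j+1) + p^2 * phiF k (j+1)) := by
        rw [← Finset.sum_range_reflect
          (fun j => c * (p * Pc k (j+1) + p^2 * phiF k (j+1))) (w+1)]
        exact Finset.sum_congr rfl fun j hj => by
          rw [show w + 1 - 1 - j + 1 = w + 1 - j by
            have := Finset.mem_range.mp hj; omega]
      have hsplit : ∑ j ∈ Finset.range (w+1),
              (c * (p * Pc k (j+1) + p^2 * phiF k (j+1))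
                + c * (p * Pc k (w+1-j) + p^2 * phiF k (w+1-j))
                + 2*c*p^2*(Pc k (j+1) * Pc k (w+1-j)))
          = 2*c*p * (∑ j ∈ Finset.range (w+1), Pc k (j+1))
            + c*p^2 * (2 * (∑ j ∈ Finset.range (w+1), phiF k (j+1))
              + 2 * (∑ j ∈ Finset.range (w+1), Pc k (j+1) * Pc k (w+1-j))) := by
        rw [Finset.sum_add_distrib, Finset.sum_add_distrib, hrefl2]
        have hA : ∑ j ∈ Finset.range (w+1), c * (p * Pc k (j+1) + p^2 * phiF k (j+1))
            = c*p * (∑ j ∈ Finset.range (w+1), Pc k (j+1))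
              + c*p^2 * (∑ j ∈ Finset.range (w+1), phiF k (j+1)) := by
          have hpt2 : ∀ j ∈ Finset.range (w+1), c * (p * Pc k (j+1) + p^2 * phiF k (j+1))
              = c*p * Pc k (j+1) + c*p^2 * phiF k (j+1) := fun j _ => by ring
          rw [Finset.sum_congr rfl hpt2, Finset.sum_add_distrib, ← Finset.mul_sum,
            ← Finset.mul_sum]
        have hC : ∑ j ∈ Finset.range (w+1), 2*c*p^2 * (Pc k (j+1) * Pc k (w+1-j))
            = 2*c*p^2 * (∑ j ∈ Finset.range (w+1), Pc k (j+1) * Pc k (w+1-j)) := by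
          rw [← Finset.mul_sum]
        rw [hA, hC]
        ring
      have hkey := key_all k (w+1) hk (by omega)
      have hkey' : c*p^2 * (2 * (∑ j ∈ Finset.range (w+1), phiF k (j+1))
              + 2 * (∑ j ∈ Finset.range (w+1), Pc k (j+1) * Pc k (w+1-j)))
          ≤ c*p^2 * (((w:ℕ)+1 : ℝ) * phiF k (w+2)) := by
        apply mul_le_mul_of_nonneg_left _ (mul_nonneg hc0 (sq_nonneg p))
        convert hkey using 2
        all_goals norm_num
        rfl
      have hcw : c * (((w:ℕ)+1 : ℝ)) = 1 := by
        rw [hc]; push_cast; field_simp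
      have hPsum : 2*c*p * (∑ j ∈ Finset.range (w+1), Pc k (j+1)) = p * Pc k (w+2) := by
        rw [sum_Pc k hk (w+1), if_neg (by omega), Pc, if_neg (by omega), if_neg (by omega)]
        rw [hc]
        have hw0 : ((w:ℝ)+1) ≠ 0 := by positivity
        have hkk : ((k:ℝ))*((k:ℝ)+1) ≠ 0 := by positivity
        push_cast
        field_simp
        ring
      calc bstE (w+2) (fun t => (cnt S k t : ℝ)^2)
          ≤ _ := hQb
        _ = 2*c*p * (∑ j ∈ Finset.range (w+1), Pc k (j+1))
            + c*p^2 * (2 * (∑ j ∈ Finset.range (w+1), phiF k (j+1))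
              + 2 * (∑ j ∈ Finset.range (w+1), Pc k (j+1) * Pc k (w+1-j))) := hsplit
        _ ≤ p * Pc k (w+2) + c*p^2 * (((w:ℕ)+1 : ℝ) * phiF k (w+2)) := by
            rw [hPsum]
            linarith [hkey']
        _ = p * Pc k (w+2) + p^2 * phiF k (w+2) := by
            rw [show c*p^2 * ((((w:ℕ)+1 : ℝ)) * phiF k (w+2))
              = (c * (((w:ℕ)+1 : ℝ))) * (p^2 * phiF k (w+2)) by ring, hcw]
            ring
end Aux9


open BT in
/-- For fixed `a > 0`, `0 < ε < 1/3`, and sets `S_k ⊆ T_k` with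
`p_k = Σ_{t ∈ S_k} P_bst(t)`, there is a constant `C > 0` (depending only on `a` and
`ε`) such that the variance of the number `X_{n,k}` of fringe subtrees belonging to
`S_k` in a random binary search tree with `n` leaves satisfies
`Var(X_{n,k}) ≤ C·p_k·n/k²` for all `n` and all positive integers `k` with
`a·ln n ≤ k ≤ n^ε`. -/
theorem variance_fringe_occurrences_bst
    (a ε : ℝ) (ha : 0 < a) (hε0 : 0 < ε) (hε : ε < 1 / 3)
    (S : ℕ → Finset BT) (hS : ∀ k, S k ⊆ treesOfSize k) :
    ∃ C : ℝ, 0 < C ∧ ∀ n k : ℕ, 0 < k → a * Real.log n ≤ (k : ℝ) → (k : ℝ) ≤ (n : ℝ) ^ ε →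
      bstE n (fun t => ((Multiset.countP (· ∈ S k) (fringe t) : ℝ)) ^ 2)
          - (bstE n (fun t => (Multiset.countP (· ∈ S k) (fringe t) : ℝ))) ^ 2
        ≤ C * (∑ t ∈ S k, pbst t) * (n : ℝ) / (k : ℝ) ^ 2 := by
  refine ⟨3, by norm_num, ?_⟩
  intro n k hk hlog hup
  have hp0 : (0:ℝ) ≤ ∑ t ∈ S k, pbst t := Finset.sum_nonneg fun t _ => pbst_nonneg t
  have hk1 : (1:ℝ) ≤ (k:ℝ) := by exact_mod_cast hk
  rcases Nat.eq_zero_or_pos n with rfl | hn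
  · exfalso
    rw [Nat.cast_zero, Real.zero_rpow (ne_of_gt hε0)] at hup
    linarith
  obtain ⟨w, rfl⟩ : ∃ w, n = w + 1 := ⟨n-1, by omega⟩
  have hp1 : (∑ t ∈ S k, pbst t) ≤ 1 := by
    have h1 := sum_pbst (k-1)
    rw [show k - 1 + 1 = k by omega] at h1
    rw [← h1]
    exact Finset.sum_le_sum_of_subset_of_nonneg (hS k) fun t _ _ => pbst_nonneg t
  have hE1 := E1 S hS k hk w
  have hE2 := E2 S hS k hk w
  set p : ℝ := ∑ t ∈ S k, pbst t with hp
  clear_value p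
  show bstE (w+1) (fun t => (cnt S k t : ℝ)^2)
      - (bstE (w+1) (fun t => (cnt S k t : ℝ)))^2 ≤ 3 * p * ((w+1 : ℕ):ℝ) / (k:ℝ)^2
  rw [hE1]
  set x : ℝ := ((w+1 : ℕ):ℝ) with hx
  have hx1 : (1:ℝ) ≤ x := by rw [hx]; exact_mod_cast Nat.succ_le_succ (Nat.zero_le w)
  have hx0 : (0:ℝ) ≤ x := by linarith
  have hKpos : (0:ℝ) < (k:ℝ) := by linarith
  rcases lt_or_ge (w+1) (2*k) with hsmall | hbig
  · -- small n : possible only when k = 1, n = 1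
    rcases Nat.lt_or_ge k 2 with hk2 | hk2
    · -- k = 1, so w + 1 < 2, so w = 0
      have hk1' : k = 1 := by omega
      have hw0 : w = 0 := by omega
      subst hk1' hw0
      have hPc : Pc 1 (0+1) = 1 := by rw [Pc]; norm_num
      have hphi : phiF 1 (0+1) = 0 := by rw [phiF, if_pos (by omega)]
      rw [hPc, hphi] at hE2
      rw [hPc]
      have hxx : x = 1 := by rw [hx]; norm_num
      rw [hxx]
      norm_num
      nlinarith [hE2, hp0, hp1]
    · -- k ≥ 2 contradicts n < 2k given k ≤ n^ε, ε < 1/3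
      exfalso
      have hn1 : (1:ℝ) ≤ ((w+1 : ℕ):ℝ) := hx1
      have h3 : ((w+1 : ℕ):ℝ)^ε ≤ ((w+1 : ℕ):ℝ)^((1:ℝ)/3) :=
        Real.rpow_le_rpow_of_exponent_le hn1 (le_of_lt hε)
      have h4 : (k:ℝ) ≤ ((w+1 : ℕ):ℝ)^((1:ℝ)/3) := le_trans hup h3
      have h5 : (k:ℝ)^(3:ℕ) ≤ (((w+1 : ℕ):ℝ)^((1:ℝ)/3))^(3:ℕ) :=
        pow_le_pow_left₀ (by linarith) h4 3
      have h6 : (((w+1 : ℕ):ℝ)^((1:ℝ)/3))^(3:ℕ) = ((w+1 : ℕ):ℝ) := by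
        rw [← Real.rpow_natCast (((w+1 : ℕ):ℝ)^((1:ℝ)/3)) 3,
          ← Real.rpow_mul (by positivity)]
        norm_num
      rw [h6] at h5
      have h7 : k^3 ≤ w+1 := by exact_mod_cast h5
      have h8 : 2*k ≤ k*k := Nat.mul_le_mul_right k hk2
      have h9 : k*k ≤ k*(k*k) := Nat.le_mul_of_pos_left _ hk
      have h10 : k^3 = k*(k*k) := by ring
      omega
  · -- main case : n ≥ 2k
    have hPc : Pc k (w+1) = 2*((w+1 : ℕ):ℝ)/((k:ℝ)*((k:ℝ)+1)) := by
      rw [Pc, if_neg (by omega), if_neg (by omega)]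
    have hphi : phiF k (w+1)
        = (2/((k:ℝ)*((k:ℝ)+1)))^2*((w+1 : ℕ):ℝ)^2 + ((w+1 : ℕ):ℝ)/(k:ℝ)^2 := by
      rw [phiF, if_neg (by omega)]
    have hfinal : p * (2*x/((k:ℝ)*((k:ℝ)+1))) + p^2*(x/(k:ℝ)^2)
        ≤ 3*p*x/(k:ℝ)^2 := by
      have heq : 3*p*x/(k:ℝ)^2 - (p * (2*x/((k:ℝ)*((k:ℝ)+1))) + p^2*(x/(k:ℝ)^2))
          = p*x*(((k:ℝ)+3) - p*((k:ℝ)+1))/((k:ℝ)^2*((k:ℝ)+1)) := by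
        field_simp
        ring
      have hnn : 0 ≤ p*x*(((k:ℝ)+3) - p*((k:ℝ)+1))/((k:ℝ)^2*((k:ℝ)+1)) := by
        apply div_nonneg _ (by positivity)
        apply mul_nonneg (mul_nonneg hp0 hx0)
        nlinarith [hp1, hk1]
      linarith
    calc bstE (w+1) (fun t => (cnt S k t : ℝ)^2) - (p * Pc k (w+1))^2
        ≤ (p * Pc k (w+1) + p^2 * phiF k (w+1)) - (p * Pc k (w+1))^2 := by linarith [hE2]
      _ = p * (2*x/((k:ℝ)*((k:ℝ)+1))) + p^2*(x/(k:ℝ)^2) := by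
          rw [hPc, hphi, hx]
          ring
      _ ≤ 3*p*x/(k:ℝ)^2 := hfinal
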